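/- Let A₁,…,A_j be left-orthonormal cores with R_0 = 1, and let p be the squared-row-norm distribution of A_{≤j} normalized by 1/R_j. Define random variables by: draw r̂ uniformly from [R_j], then for k = j down to 1 draw t̂_k with probability proportional to ‖A_k[:,t_k,:]·h_{>k}‖² where h_{>k} = A_{k+1}[:,t̂_{k+1},:]·…·A_j[:,t̂_j, r̂]. Then the joint distribution of (t̂_1,…,t̂_j), after marginalizing over r̂, equals p. -/
import Mathlib

open Matrix

variable (R I : ℕ → ℕ)

/-- The `i`-th lateral ttSlice `A_k[:, i, :]` of the `k`-th TT-core. -/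
def ttSlice (𝒜 : (k : ℕ) → Fin (R k) → Fin (I k) → Fin (R (k + 1)) → ℝ)
    (k : ℕ) (i : Fin (I k)) : Matrix (Fin (R k)) (Fin (R (k + 1))) ℝ :=
  fun a b => 𝒜 k a i b

/-- Entry of the chain matricization `A_{≤j}`:
`A_{≤j}[(i_1,…,i_j), r_j] = Σ_{r_0,…,r_{j-1}} ∏_{k=1}^j A_k(r_{k-1}, i_k, r_k)`. -/
def chainEntry (𝒜 : (k : ℕ) → Fin (R k) → Fin (I k) → Fin (R (k + 1)) → ℝ)
    (j : ℕ) (s : ∀ k : Fin j, Fin (I k)) (rj : Fin (R j)) : ℝ :=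
  ∑ p : ∀ k : Fin j, Fin (R k), ∏ k : Fin j,
    𝒜 k (p k) (s k)
      (if h : (k : ℕ) + 1 < j then p ⟨k + 1, h⟩
       else Fin.cast (congrArg R (by have := k.isLt; omega)) rj)

/-- Product of lateral slices `A₁[:,s₁,:] ⋯ A_j[:,s_j,:]`. -/
def sliceProd (𝒜 : (k : ℕ) → Fin (R k) → Fin (I k) → Fin (R (k + 1)) → ℝ) :
    (j : ℕ) → (∀ k : Fin j, Fin (I k)) → Matrix (Fin (R 0)) (Fin (R j)) ℝ
  | 0, _ => 1
  | n + 1, s =>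
      sliceProd 𝒜 n (fun k => s ⟨k.1, Nat.lt_succ_of_lt k.2⟩) *
        ttSlice R I 𝒜 n (s ⟨n, Nat.lt_succ_self n⟩)

/-- Product of lateral slices from position `a` (inclusive), `d` slices long:
`A_{a+1}[:,s_{a+1},:] ⋯ A_{a+d}[:,s_{a+d},:]`. -/
def prodFrom (𝒜 : (k : ℕ) → Fin (R k) → Fin (I k) → Fin (R (k + 1)) → ℝ)
    (j : ℕ) (s : ∀ k : Fin j, Fin (I k)) (a : ℕ) :
    (d : ℕ) → a + d ≤ j → Matrix (Fin (R a)) (Fin (R (a + d))) ℝ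
  | 0, _ => (1 : Matrix (Fin (R a)) (Fin (R a)) ℝ)
  | d + 1, h =>
      prodFrom 𝒜 j s a d (by omega) * ttSlice R I 𝒜 (a + d) (s ⟨a + d, by omega⟩)

/-! ### Auxiliary lemmas -/

lemma A_cast (𝒜 : (k : ℕ) → Fin (R k) → Fin (I k) → Fin (R (k + 1)) → ℝ)
    {n m : ℕ} (h : n = m) (x : Fin (R n)) (i : Fin (I n)) (y : Fin (R (n+1))) :
    𝒜 n x i y = 𝒜 m (Fin.cast (congrArg R h) x) (Fin.cast (congrArg I h) i)
      (Fin.cast (congrArg R (by rw [h])) y) := by subst h; rfl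

lemma t_cast {j : ℕ} (s : ∀ k : Fin j, Fin (I k)) {n m : ℕ} (hn : n < j) (hm : m < j)
    (h : n = m) : Fin.cast (congrArg I h) (s ⟨n, hn⟩) = s ⟨m, hm⟩ := by subst h; rfl

lemma prodFrom_cast (𝒜 : (k : ℕ) → Fin (R k) → Fin (I k) → Fin (R (k + 1)) → ℝ)
    {j : ℕ} (s : ∀ k : Fin j, Fin (I k)) {a a' d d' : ℕ} (ha : a = a') (hd : d = d')
    (h : a + d ≤ j) (x : Fin (R a)) (y : Fin (R (a + d))) :
    prodFrom R I 𝒜 j s a d h x y =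
      prodFrom R I 𝒜 j s a' d' (by omega) (Fin.cast (congrArg R ha) x)
        (Fin.cast (congrArg R (by omega)) y) := by subst ha; subst hd; rfl

lemma slice_cast (𝒜 : (k : ℕ) → Fin (R k) → Fin (I k) → Fin (R (k + 1)) → ℝ)
    {j : ℕ} (s : ∀ k : Fin j, Fin (I k)) {n m : ℕ} (h : n = m) (hn : n < j)
    (x : Fin (R n)) (y : Fin (R (n+1))) :
    ttSlice R I 𝒜 n (s ⟨n, hn⟩) x y =
      ttSlice R I 𝒜 m (s ⟨m, h ▸ hn⟩) (Fin.cast (congrArg R h) x)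
        (Fin.cast (congrArg R (by rw [h])) y) := by subst h; rfl

lemma sumSq_cast (𝒜 : (k : ℕ) → Fin (R k) → Fin (I k) → Fin (R (k + 1)) → ℝ)
    {j : ℕ} (s : ∀ k : Fin j, Fin (I k)) {a a' d d' : ℕ} (ha : a = a') (hd : d = d')
    (h : a + d ≤ j) (y : Fin (R (a + d))) :
    ∑ x : Fin (R a), (prodFrom R I 𝒜 j s a d h x y) ^ 2 =
      ∑ x : Fin (R a'), (prodFrom R I 𝒜 j s a' d' (by omega) x
        (Fin.cast (congrArg R (by omega)) y)) ^ 2 := by subst ha; subst hd; rfl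

lemma frontPeel (𝒜 : (k : ℕ) → Fin (R k) → Fin (I k) → Fin (R (k + 1)) → ℝ)
    {j : ℕ} (s : ∀ k : Fin j, Fin (I k)) (a : ℕ) :
    ∀ (d : ℕ) (h : a + (d+1) ≤ j) (x : Fin (R a)) (y : Fin (R (a+(d+1)))),
    prodFrom R I 𝒜 j s a (d+1) h x y =
      ∑ m : Fin (R (a+1)), 𝒜 a x (s ⟨a, by omega⟩) m *
        prodFrom R I 𝒜 j s (a+1) d (by omega) m
          (Fin.cast (congrArg R (by omega : a+(d+1) = a+1+d)) y)
  | 0, h, x, y => by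
    show (prodFrom R I 𝒜 j s a 0 (by omega) * ttSlice R I 𝒜 (a+0) (s ⟨a+0, by omega⟩)) x y = _
    rw [Matrix.mul_apply]
    simp only [prodFrom, Matrix.one_apply, ite_mul, one_mul, zero_mul, mul_ite, mul_one,
      mul_zero, Finset.sum_ite_eq, Finset.sum_ite_eq', Finset.mem_univ, if_true, ttSlice]
    rfl
  | d+1, h, x, y => by
    show (prodFrom R I 𝒜 j s a (d+1) _ * ttSlice R I 𝒜 (a+(d+1)) (s ⟨a+(d+1), _⟩)) x y = _
    rw [Matrix.mul_apply]
    have IH := frontPeel 𝒜 s a d (by omega)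
    calc ∑ q : Fin (R (a+(d+1))), prodFrom R I 𝒜 j s a (d+1) (by omega) x q *
            ttSlice R I 𝒜 (a+(d+1)) (s ⟨a+(d+1), by omega⟩) q y
        = ∑ q : Fin (R (a+(d+1))), (∑ m : Fin (R (a+1)), 𝒜 a x (s ⟨a, by omega⟩) m *
            prodFrom R I 𝒜 j s (a+1) d (by omega) m
              (Fin.cast (congrArg R (by omega : a+(d+1) = a+1+d)) q)) *
            ttSlice R I 𝒜 (a+(d+1)) (s ⟨a+(d+1), by omega⟩) q y := by
          refine Finset.sum_congr rfl fun q _ => ?_; rw [IH]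
      _ = ∑ m : Fin (R (a+1)), 𝒜 a x (s ⟨a, by omega⟩) m *
            ∑ q : Fin (R (a+(d+1))), prodFrom R I 𝒜 j s (a+1) d (by omega) m
              (Fin.cast (congrArg R (by omega : a+(d+1) = a+1+d)) q) *
            ttSlice R I 𝒜 (a+(d+1)) (s ⟨a+(d+1), by omega⟩) q y := by
          simp only [Finset.sum_mul, mul_assoc]
          rw [Finset.sum_comm]
          simp only [Finset.mul_sum]
      _ = ∑ m : Fin (R (a+1)), 𝒜 a x (s ⟨a, by omega⟩) m *
            prodFrom R I 𝒜 j s (a+1) (d+1) (by omega) m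
              (Fin.cast (congrArg R (by omega : a+(d+2) = a+1+(d+1))) y) := by
          refine Finset.sum_congr rfl fun m _ => ?_
          congr 1
          show _ = (prodFrom R I 𝒜 j s (a+1) d _ * ttSlice R I 𝒜 (a+1+d) (s ⟨a+1+d, _⟩)) m _
          rw [Matrix.mul_apply]
          rw [← Equiv.sum_comp (finCongr (congrArg R (by omega : a+(d+1) = a+1+d)))]
          refine Finset.sum_congr rfl fun q _ => ?_
          congr 1
          exact slice_cast R I 𝒜 s (by omega : a+(d+1) = a+1+d) (by omega) q y

lemma prodFrom_congr (𝒜 : (k : ℕ) → Fin (R k) → Fin (I k) → Fin (R (k + 1)) → ℝ)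
    {j j' : ℕ} (s : ∀ k : Fin j, Fin (I k)) (s' : ∀ k : Fin j', Fin (I k)) (a : ℕ) :
    ∀ (d : ℕ) (h : a + d ≤ j) (h' : a + d ≤ j'),
    (∀ k (hk : k < j) (hk' : k < j'), k < a + d → s ⟨k, hk⟩ = s' ⟨k, hk'⟩) →
    prodFrom R I 𝒜 j s a d h = prodFrom R I 𝒜 j' s' a d h'
  | 0, _, _, _ => rfl
  | d+1, h, h', hs => by
    show prodFrom R I 𝒜 j s a d _ * ttSlice R I 𝒜 (a+d) (s ⟨a+d, _⟩) =
      prodFrom R I 𝒜 j' s' a d _ * ttSlice R I 𝒜 (a+d) (s' ⟨a+d, _⟩)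
    rw [prodFrom_congr 𝒜 s s' a d (by omega) (by omega)
        (fun k hk hk' hlt => hs k hk hk' (by omega)),
      hs (a+d) (by omega) (by omega) (by omega)]

lemma apply_fin_cast {j : ℕ} (p : ∀ m : Fin j, Fin (R m)) {m m' : Fin j} (h : m = m') :
    p m = Fin.cast (congrArg R (by rw [h])) (p m') := by subst h; rfl

lemma chainEntry_succ (𝒜 : (k : ℕ) → Fin (R k) → Fin (I k) → Fin (R (k + 1)) → ℝ)
    (j : ℕ) (t : ∀ k : Fin (j+1), Fin (I k)) (r : Fin (R (j+1))) :
    chainEntry R I 𝒜 (j+1) t r =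
      ∑ q : Fin (R j), chainEntry R I 𝒜 j (fun k => t k.castSucc) q *
        𝒜 j q (t (Fin.last j)) r := by
  unfold chainEntry
  rw [← Equiv.sum_comp (Fin.snocEquiv (fun k : Fin (j+1) => Fin (R k)))]
  rw [Fintype.sum_prod_type]
  refine Finset.sum_congr rfl fun q _ => ?_
  rw [Finset.sum_mul]
  refine Finset.sum_congr rfl fun p _ => ?_
  rw [Fin.prod_univ_castSucc]
  congr 1
  · refine Finset.prod_congr rfl fun k _ => ?_
    have h1 : Fin.snocEquiv (fun k : Fin (j+1) => Fin (R k)) (q, p) k.castSucc = p k := by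
      simp [Fin.snocEquiv]
    rw [h1]
    congr 1
    split_ifs with h2 h3 h3
    · -- k+1 < j+1 and k+1 < j
      have heq1 : (⟨(k.castSucc : ℕ) + 1, h2⟩ : Fin (j+1)) =
          (⟨(k : ℕ)+1, h3⟩ : Fin j).castSucc := rfl
      rw [apply_fin_cast R (Fin.snocEquiv (fun k : Fin (j+1) => Fin (R k)) (q, p)) heq1]
      have h4 : Fin.snocEquiv (fun k : Fin (j+1) => Fin (R k)) (q, p)
          (⟨(k : ℕ)+1, h3⟩ : Fin j).castSucc = p ⟨(k : ℕ)+1, h3⟩ := by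
        simp only [Fin.snocEquiv_apply, Fin.snoc_castSucc]
      rw [h4]
      rfl
    · -- k+1 < j+1, k+1 = j
      have h5 : (⟨(k.castSucc : ℕ) + 1, h2⟩ : Fin (j+1)) = Fin.last j := by
        have hcs : (k.castSucc : ℕ) = (k : ℕ) := rfl
        have := k.isLt
        apply Fin.ext; simp [hcs]; omega
      rw [apply_fin_cast R (Fin.snocEquiv (fun k : Fin (j+1) => Fin (R k)) (q, p)) h5]
      have h6 : Fin.snocEquiv (fun k : Fin (j+1) => Fin (R k)) (q, p) (Fin.last j) = q := by
        simp [Fin.snocEquiv]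
      rw [h6]
    all_goals exact absurd (Nat.succ_lt_succ k.isLt) h2
  · have h7 : Fin.snocEquiv (fun k : Fin (j+1) => Fin (R k)) (q, p) (Fin.last j) = q := by
      simp [Fin.snocEquiv]
    have h8 : ¬ ((Fin.last j : ℕ) + 1 < j + 1) := by simp
    rw [dif_neg h8, h7]
    rfl

lemma chainEntry_eq (𝒜 : (k : ℕ) → Fin (R k) → Fin (I k) → Fin (R (k + 1)) → ℝ) :
    ∀ (j : ℕ) (t : ∀ k : Fin j, Fin (I k)) (r : Fin (R j)),
    chainEntry R I 𝒜 j t r =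
      ∑ x : Fin (R 0), prodFrom R I 𝒜 j t 0 j (by omega) x
        (Fin.cast (congrArg R (by omega : j = 0 + j)) r)
  | 0, t, r => by
    unfold chainEntry
    simp [prodFrom, Matrix.one_apply, Finset.sum_ite_eq', eq_comm]
  | j+1, t, r => by
    rw [chainEntry_succ R I 𝒜 j t r]
    have hcongr : prodFrom R I 𝒜 (j+1) t 0 j (by omega) =
        prodFrom R I 𝒜 j (fun k => t k.castSucc) 0 j (by omega) :=
      prodFrom_congr R I 𝒜 t _ 0 j (by omega) (by omega) (fun k hk hk' _ => rfl)
    show _ = ∑ x : Fin (R 0),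
      (prodFrom R I 𝒜 (j+1) t 0 j (by omega) *
        ttSlice R I 𝒜 (0+j) (t ⟨0+j, by omega⟩)) x
        (Fin.cast (congrArg R (by omega : j+1 = 0+(j+1))) r)
    simp only [Matrix.mul_apply]
    rw [Finset.sum_comm]
    rw [← Equiv.sum_comp (finCongr (congrArg R (by omega : j = 0 + j)))]
    refine Finset.sum_congr rfl fun q _ => ?_
    rw [chainEntry_eq 𝒜 j (fun k => t k.castSucc) q, Finset.sum_mul]
    rw [hcongr]
    refine Finset.sum_congr rfl fun x _ => ?_
    congr 1
    exact slice_cast R I 𝒜 t (by omega : j = 0+j) (by omega) q r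

lemma ortho_sum (𝒜 : (k : ℕ) → Fin (R k) → Fin (I k) → Fin (R (k + 1)) → ℝ)
    (k : ℕ)
    (hortho : ∑ i : Fin (I k), (ttSlice R I 𝒜 k i)ᵀ * ttSlice R I 𝒜 k i = 1)
    (v : Fin (R (k+1)) → ℝ) :
    ∑ i : Fin (I k), ∑ a : Fin (R k), (ttSlice R I 𝒜 k i *ᵥ v) a ^ 2 = ∑ m, v m ^ 2 := by
  have h1 : ∀ M : Matrix (Fin (R k)) (Fin (R (k+1))) ℝ,
      ∑ a, (M *ᵥ v) a ^ 2 = (v ᵥ* (Mᵀ * M)) ⬝ᵥ v := by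
    intro M
    have : ∑ a, (M *ᵥ v) a ^ 2 = (M *ᵥ v) ⬝ᵥ (M *ᵥ v) := by
      simp [dotProduct, sq]
    rw [this, Matrix.dotProduct_mulVec, ← Matrix.vecMul_transpose, Matrix.vecMul_vecMul]
  simp_rw [h1]
  have h2 : ∑ i : Fin (I k), (v ᵥ* ((ttSlice R I 𝒜 k i)ᵀ * ttSlice R I 𝒜 k i)) ⬝ᵥ v =
      (v ᵥ* (∑ i : Fin (I k), (ttSlice R I 𝒜 k i)ᵀ * ttSlice R I 𝒜 k i)) ⬝ᵥ v := by
    simp [dotProduct, Matrix.vecMul, Matrix.sum_apply, Finset.sum_mul,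
      Finset.mul_sum]
    rw [Finset.sum_comm]
    exact Finset.sum_congr rfl fun y _ => Finset.sum_comm
  rw [h2, hortho, Matrix.vecMul_one]
  simp [dotProduct, sq]

lemma tele_step {a b : ℝ} (h0 : 0 ≤ a) (hab : a ≤ b) : b * (a / b) = a := by
  rcases eq_or_ne b 0 with hb | hb
  · have : a = 0 := le_antisymm (hb ▸ hab) h0
    simp [hb, this]
  · field_simp

def Nsq (𝒜 : (k : ℕ) → Fin (R k) → Fin (I k) → Fin (R (k + 1)) → ℝ)
    (j : ℕ) (t : ∀ k : Fin j, Fin (I k)) (r : Fin (R j)) (d : ℕ) (hd : d ≤ j) : ℝ :=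
  ∑ x : Fin (R (j - d)), (prodFrom R I 𝒜 j t (j - d) d (by omega) x
    (Fin.cast (congrArg R (by omega : j = j - d + d)) r)) ^ 2

lemma Nsq_congr (𝒜 : (k : ℕ) → Fin (R k) → Fin (I k) → Fin (R (k + 1)) → ℝ)
    (j : ℕ) (t : ∀ k : Fin j, Fin (I k)) (r : Fin (R j)) {d d' : ℕ} (h : d = d')
    (hd : d ≤ j) (hd' : d' ≤ j) :
    Nsq R I 𝒜 j t r d hd = Nsq R I 𝒜 j t r d' hd' := by subst h; rfl

lemma Nsq_nonneg (𝒜 : (k : ℕ) → Fin (R k) → Fin (I k) → Fin (R (k + 1)) → ℝ)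
    (j : ℕ) (t : ∀ k : Fin j, Fin (I k)) (r : Fin (R j)) (d : ℕ) (hd : d ≤ j) :
    0 ≤ Nsq R I 𝒜 j t r d hd :=
  Finset.sum_nonneg fun _ _ => sq_nonneg _

lemma Nsq_zero (𝒜 : (k : ℕ) → Fin (R k) → Fin (I k) → Fin (R (k + 1)) → ℝ)
    (j : ℕ) (t : ∀ k : Fin j, Fin (I k)) (r : Fin (R j)) :
    Nsq R I 𝒜 j t r 0 (by omega) = 1 := by
  simp [Nsq, prodFrom, Matrix.one_apply, apply_ite (fun z : ℝ => z ^ 2),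
    Finset.sum_ite_eq', eq_comm]

lemma den_eq (𝒜 : (k : ℕ) → Fin (R k) → Fin (I k) → Fin (R (k + 1)) → ℝ)
    (j : ℕ) (t : ∀ k : Fin j, Fin (I k)) (r : Fin (R j)) (κ : Fin j)
    (hortho : ∑ i : Fin (I ↑κ), (ttSlice R I 𝒜 ↑κ i)ᵀ * ttSlice R I 𝒜 ↑κ i = 1) :
    (∑ i : Fin (I ↑κ), ∑ a : Fin (R ↑κ),
      (ttSlice R I 𝒜 ↑κ i *ᵥ
        (fun x => prodFrom R I 𝒜 j t ((κ : ℕ) + 1) (j - ((κ : ℕ) + 1))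
          (by have := κ.isLt; omega) x
          (Fin.cast (congrArg R (by have := κ.isLt; omega)) r))) a ^ 2) =
    Nsq R I 𝒜 j t r (j - ((κ : ℕ) + 1)) (by omega) := by
  rw [ortho_sum R I 𝒜 ↑κ hortho]
  exact sumSq_cast R I 𝒜 t (show (κ : ℕ) + 1 = j - (j - ((κ : ℕ) + 1)) by
    have := κ.isLt; omega) rfl (by have := κ.isLt; omega) _

lemma num_eq (𝒜 : (k : ℕ) → Fin (R k) → Fin (I k) → Fin (R (k + 1)) → ℝ)
    (j : ℕ) (t : ∀ k : Fin j, Fin (I k)) (r : Fin (R j)) (κ : Fin j) :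
    (∑ a : Fin (R ↑κ),
      (ttSlice R I 𝒜 ↑κ (t κ) *ᵥ
        (fun x => prodFrom R I 𝒜 j t ((κ : ℕ) + 1) (j - ((κ : ℕ) + 1))
          (by have := κ.isLt; omega) x
          (Fin.cast (congrArg R (by have := κ.isLt; omega)) r))) a ^ 2) =
    Nsq R I 𝒜 j t r (j - (κ : ℕ)) (by omega) := by
  have hfp : ∀ a : Fin (R ↑κ),
      (ttSlice R I 𝒜 ↑κ (t κ) *ᵥ
        (fun x => prodFrom R I 𝒜 j t ((κ : ℕ) + 1) (j - ((κ : ℕ) + 1))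
          (by have := κ.isLt; omega) x
          (Fin.cast (congrArg R (by have := κ.isLt; omega)) r))) a =
      prodFrom R I 𝒜 j t (κ : ℕ) ((j - ((κ : ℕ) + 1)) + 1) (by have := κ.isLt; omega) a
        (Fin.cast (congrArg R (by have := κ.isLt; omega)) r) := by
    intro a
    rw [frontPeel R I 𝒜 t (κ : ℕ) (j - ((κ : ℕ) + 1)) (by have := κ.isLt; omega) a
      (Fin.cast (congrArg R (by have := κ.isLt; omega)) r)]
    rfl
  simp_rw [hfp]
  exact sumSq_cast R I 𝒜 t (show (κ : ℕ) = j - (j - (κ : ℕ)) by have := κ.isLt; omega)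
    (show (j - ((κ : ℕ) + 1)) + 1 = j - (κ : ℕ) by have := κ.isLt; omega)
    (by have := κ.isLt; omega) _

lemma Nsq_mono (𝒜 : (k : ℕ) → Fin (R k) → Fin (I k) → Fin (R (k + 1)) → ℝ)
    (j : ℕ) (t : ∀ k : Fin j, Fin (I k)) (r : Fin (R j)) (κ : Fin j)
    (hortho : ∑ i : Fin (I ↑κ), (ttSlice R I 𝒜 ↑κ i)ᵀ * ttSlice R I 𝒜 ↑κ i = 1) :
    Nsq R I 𝒜 j t r (j - (κ : ℕ)) (by omega) ≤
      Nsq R I 𝒜 j t r (j - ((κ : ℕ) + 1)) (by omega) := by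
  rw [← num_eq R I 𝒜 j t r κ, ← den_eq R I 𝒜 j t r κ hortho]
  exact Finset.single_le_sum (f := fun i : Fin (I ↑κ) => ∑ a : Fin (R ↑κ),
      (ttSlice R I 𝒜 ↑κ i *ᵥ
        (fun x => prodFrom R I 𝒜 j t ((κ : ℕ) + 1) (j - ((κ : ℕ) + 1))
          (by have := κ.isLt; omega) x
          (Fin.cast (congrArg R (by have := κ.isLt; omega)) r))) a ^ 2)
    (fun i _ => Finset.sum_nonneg fun a _ => sq_nonneg _) (Finset.mem_univ (t κ))

def NsqT (𝒜 : (k : ℕ) → Fin (R k) → Fin (I k) → Fin (R (k + 1)) → ℝ)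
    (j : ℕ) (t : ∀ k : Fin j, Fin (I k)) (r : Fin (R j)) (d : ℕ) : ℝ :=
  if hd : d ≤ j then Nsq R I 𝒜 j t r d hd else 1

lemma NsqT_of_le (𝒜 : (k : ℕ) → Fin (R k) → Fin (I k) → Fin (R (k + 1)) → ℝ)
    (j : ℕ) (t : ∀ k : Fin j, Fin (I k)) (r : Fin (R j)) {d : ℕ} (hd : d ≤ j) :
    NsqT R I 𝒜 j t r d = Nsq R I 𝒜 j t r d hd := dif_pos hd

/-- **Correctness of the chain sampler.** Draw `r̂` uniformly from `[R_j]`; then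
for `κ = j-1` down to `0` (0-based positions) draw `t̂_κ` with probability
proportional to `‖A_κ[:,t_κ,:]·h_{>κ}‖²`, where
`h_{>κ} = A_{κ+1}[:,t̂_{κ+1},:] ⋯ A_j[:,t̂_j, r̂]` (and `h_{>j} = e_{r̂}`).
After marginalizing over `r̂`, the joint distribution of `(t̂_1,…,t̂_j)` equals
the squared-row-norm distribution `p(t) = ‖A_{≤j}[t,:]‖²/R_j`. -/
theorem chain_sampler_correct
    (𝒜 : (k : ℕ) → Fin (R k) → Fin (I k) → Fin (R (k + 1)) → ℝ)
    (j : ℕ) (hR0 : R 0 = 1)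
    (hortho : ∀ k, k < j →
      ∑ i : Fin (I k), (ttSlice R I 𝒜 k i)ᵀ * ttSlice R I 𝒜 k i = 1)
    (t : ∀ m : Fin j, Fin (I m)) :
    (R j : ℝ)⁻¹ *
        ∑ r : Fin (R j), ∏ κ : Fin j,
          (fun w : Fin (I κ) → ℝ => w (t κ) / ∑ i : Fin (I κ), w i)
            (fun i : Fin (I κ) =>
              ∑ a : Fin (R κ),
                (ttSlice R I 𝒜 κ i *ᵥ
                  (fun x =>
                    prodFrom R I 𝒜 j t ((κ : ℕ) + 1) (j - ((κ : ℕ) + 1))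
                        (by have := κ.isLt; omega) x
                      (Fin.cast (congrArg R (by have := κ.isLt; omega)) r))) a ^ 2) =
      (R j : ℝ)⁻¹ * ∑ r : Fin (R j), chainEntry R I 𝒜 j t r ^ 2 := by
  congr 1
  refine Finset.sum_congr rfl fun r _ => ?_
  have mono' : ∀ d (hd : d + 1 ≤ j),
      Nsq R I 𝒜 j t r (d+1) hd ≤ Nsq R I 𝒜 j t r d (by omega) := by
    intro d hd
    have h := Nsq_mono R I 𝒜 j t r ⟨j - (d+1), by omega⟩ (hortho _ (by omega))
    calc Nsq R I 𝒜 j t r (d+1) hd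
        = Nsq R I 𝒜 j t r (j - ((⟨j - (d+1), by omega⟩ : Fin j) : ℕ)) (by omega) :=
          Nsq_congr R I 𝒜 j t r (by simp; omega) _ _
      _ ≤ Nsq R I 𝒜 j t r (j - (((⟨j - (d+1), by omega⟩ : Fin j) : ℕ) + 1)) (by omega) := h
      _ = Nsq R I 𝒜 j t r d (by omega) := Nsq_congr R I 𝒜 j t r (by simp; omega) _ _
  have tele : ∀ d, d ≤ j →
      ∏ i ∈ Finset.range d, (NsqT R I 𝒜 j t r (i+1) / NsqT R I 𝒜 j t r i) =
        NsqT R I 𝒜 j t r d := by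
    intro d
    induction d with
    | zero =>
      intro _
      rw [Finset.prod_range_zero, NsqT_of_le R I 𝒜 j t r (Nat.zero_le j),
        Nsq_zero R I 𝒜 j t r]
    | succ d ih =>
      intro hd
      rw [Finset.prod_range_succ, ih (by omega), NsqT_of_le R I 𝒜 j t r (by omega : d ≤ j),
        NsqT_of_le R I 𝒜 j t r hd]
      exact tele_step (Nsq_nonneg R I 𝒜 j t r (d+1) hd) (mono' d hd)
  calc (∏ κ : Fin j,
          (fun w : Fin (I κ) → ℝ => w (t κ) / ∑ i : Fin (I κ), w i)
            (fun i : Fin (I κ) =>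
              ∑ a : Fin (R κ),
                (ttSlice R I 𝒜 κ i *ᵥ
                  (fun x =>
                    prodFrom R I 𝒜 j t ((κ : ℕ) + 1) (j - ((κ : ℕ) + 1))
                        (by have := κ.isLt; omega) x
                      (Fin.cast (congrArg R (by have := κ.isLt; omega)) r))) a ^ 2))
      = ∏ κ : Fin j, (NsqT R I 𝒜 j t r (j - (κ : ℕ)) /
          NsqT R I 𝒜 j t r (j - ((κ : ℕ) + 1))) := by
        refine Finset.prod_congr rfl fun κ _ => ?_
        show (∑ a : Fin (R ↑κ), _) / (∑ i : Fin (I ↑κ), ∑ a : Fin (R ↑κ), _) = _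
        rw [num_eq R I 𝒜 j t r κ, den_eq R I 𝒜 j t r κ (hortho _ κ.isLt),
          NsqT_of_le R I 𝒜 j t r (by omega : j - (κ : ℕ) ≤ j),
          NsqT_of_le R I 𝒜 j t r (by omega : j - ((κ : ℕ) + 1) ≤ j)]
    _ = ∏ i ∈ Finset.range j, (NsqT R I 𝒜 j t r (j - i) / NsqT R I 𝒜 j t r (j - (i+1))) :=
        Fin.prod_univ_eq_prod_range
          (fun i => NsqT R I 𝒜 j t r (j - i) / NsqT R I 𝒜 j t r (j - (i+1))) j
    _ = ∏ i ∈ Finset.range j,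
          (NsqT R I 𝒜 j t r (j - (j-1-i)) / NsqT R I 𝒜 j t r (j - ((j-1-i)+1))) :=
        (Finset.prod_range_reflect
          (fun i => NsqT R I 𝒜 j t r (j - i) / NsqT R I 𝒜 j t r (j - (i+1))) j).symm
    _ = ∏ i ∈ Finset.range j, (NsqT R I 𝒜 j t r (i+1) / NsqT R I 𝒜 j t r i) := by
        refine Finset.prod_congr rfl fun i hi => ?_
        rw [Finset.mem_range] at hi
        congr 2 <;> omega
    _ = NsqT R I 𝒜 j t r j := tele j (le_refl j)
    _ = chainEntry R I 𝒜 j t r ^ 2 := by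
        rw [NsqT_of_le R I 𝒜 j t r (le_refl j)]
        haveI : Unique (Fin (R 0)) := by rw [hR0]; infer_instance
        have h1 : Nsq R I 𝒜 j t r j (le_refl j) =
            ∑ x : Fin (R 0), (prodFrom R I 𝒜 j t 0 j (by omega) x
              (Fin.cast (congrArg R (by omega : j = 0 + j)) r)) ^ 2 :=
          sumSq_cast R I 𝒜 t (show j - j = 0 by omega) rfl (by omega) _
        rw [h1, chainEntry_eq R I 𝒜 j t r, Fintype.sum_unique, Fintype.sum_unique]
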